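/- For all integers x ≥ 1 and m ≥ x+1, if c′ ∈ C(m+1,x) starts, from the left, with 1 followed by x+1 zeros (Group 4), and c″ denotes the binary word formed by the m−x rightmost bits of c′, then c″ ∈ C(m−x,x) and 2·(g(m+1,x,c′) − g(m−x,x,c″)) = N(m+1,x); that is, the shift in codeword indices for Group 4 is ζ₄ = (1/2) N(m+1,x). -/

import Mathlib

/-- `noForbidden m x c` says the binary word `c = (c_{m-1}, …, c_0)` contains no contiguous
subword of the form `0 1^y 0` or `1 0^y 1` for any `1 ≤ y ≤ x`. -/
def noForbidden (m x : ℕ) (c : Fin m → Bool) : Prop :=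
  ∀ j y : ℕ, 1 ≤ y → y ≤ x → (h : j + y + 1 < m) →
    ¬ ((∀ k, 1 ≤ k → (hk : k ≤ y) → c ⟨j + k, by omega⟩ = ! c ⟨j, by omega⟩) ∧
        c ⟨j + y + 1, h⟩ = c ⟨j, by omega⟩)

/-- `N(m, x)`: the cardinality of the LOCO code `C(m, x)`. -/
noncomputable def locoN (m x : ℕ) : ℕ := Nat.card {c : Fin m → Bool // noForbidden m x c}

/-- `N(k, x)` extended to integer `k` by the convention `N(k, x) = 2` for `k ≤ 1`. -/
noncomputable def Nex (k : ℤ) (x : ℕ) : ℤ := if k ≤ 1 then 2 else (locoN k.toNat x : ℤ)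

/-- Strict lexicographic order on binary words, comparing bits from `c_{m-1}`
(most significant) down to `c_0`, with `0 < 1`. -/
def lexLt (m : ℕ) (d c : Fin m → Bool) : Prop :=
  ∃ i : Fin m, d i = false ∧ c i = true ∧ ∀ j : Fin m, (i : ℕ) < (j : ℕ) → d j = c j

/-- The index `g(m, x, c)` of a codeword: the number of codewords of `C(m, x)` that
precede `c` in lexicographic order. -/
noncomputable def locoIdx (m x : ℕ) (c : Fin m → Bool) : ℕ :=
  Nat.card {d : Fin m → Bool // noForbidden m x d ∧ lexLt m d c}

lemma fin_congr {N : ℕ} (c : Fin N → Bool) {a b : ℕ} (ha : a < N) (hb : b < N)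
    (h : a = b) : c ⟨a, ha⟩ = c ⟨b, hb⟩ := by subst h; rfl

lemma noForbidden_not {m x : ℕ} {c : Fin m → Bool} (h : noForbidden m x c) :
    noForbidden m x (fun i => ! c i) := by
  intro j y hy1 hy2 hj
  rintro ⟨ha, hb⟩
  exact h j y hy1 hy2 hj
    ⟨fun k hk hk2 => Bool.not_inj (ha k hk hk2), Bool.not_inj hb⟩

lemma noForbidden_restrict {M n x : ℕ} (hn : n ≤ M) (c : Fin M → Bool)
    (hc : noForbidden M x c) :
    noForbidden n x (fun i : Fin n => c ⟨(i : ℕ), lt_of_lt_of_le i.isLt hn⟩) := by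
  intro j y hy1 hy2 hj
  rintro ⟨ha, hb⟩
  exact hc j y hy1 hy2 (by omega) ⟨fun k hk hk2 => ha k hk hk2, hb⟩

lemma card_split {α : Type*} [Finite α] (p q : α → Prop) :
    Nat.card {a // p a} = Nat.card {a // p a ∧ q a} + Nat.card {a // p a ∧ ¬ q a} := by
  classical
  calc Nat.card {a // p a}
      = Nat.card ({a // p a ∧ q a} ⊕ {a // p a ∧ ¬ q a}) := by
        refine Nat.card_congr ?_
        exact ((Equiv.sumCompl fun x : {a // p a} => q x.1).symm.trans
          (Equiv.sumCongr (Equiv.subtypeSubtypeEquivSubtypeInter p q)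
            (Equiv.subtypeSubtypeEquivSubtypeInter p (fun a => ¬ q a))))
    _ = _ := Nat.card_sum

def extWord (m x : ℕ) (e : Fin (m - x) → Bool) : Fin (m + 1) → Bool :=
  fun i => if h : (i : ℕ) < m - x then e ⟨i, h⟩ else (if (i : ℕ) = m then true else false)

lemma extWord_lt {m x : ℕ} (e : Fin (m - x) → Bool) (i : ℕ) (hi : i < m + 1)
    (h : i < m - x) : extWord m x e ⟨i, hi⟩ = e ⟨i, h⟩ := dif_pos h

lemma extWord_mid {m x : ℕ} (e : Fin (m - x) → Bool) (i : ℕ) (hi : i < m + 1)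
    (h1 : m - x ≤ i) (h2 : i < m) : extWord m x e ⟨i, hi⟩ = false := by
  show (if h : i < m - x then e ⟨i, h⟩ else (if i = m then true else false)) = false
  rw [dif_neg (by omega), if_neg (by omega)]

lemma extWord_top {m x : ℕ} (e : Fin (m - x) → Bool) (hi : m < m + 1) :
    extWord m x e ⟨m, hi⟩ = true := by
  show (if h : m < m - x then e ⟨m, h⟩ else (if m = m then true else false)) = true
  rw [dif_neg (by omega), if_pos rfl]

lemma extWord_noForbidden (m x : ℕ) (hx : 1 ≤ x) (hm : x + 1 ≤ m)
    (e : Fin (m - x) → Bool) (he : noForbidden (m - x) x e)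
    (htop : e ⟨m - x - 1, by omega⟩ = false) :
    noForbidden (m + 1) x (extWord m x e) := by
  intro j y hy1 hy2 hj
  rintro ⟨ha, hb⟩
  by_cases hA : j + y + 1 < m - x
  · refine he j y hy1 hy2 hA ⟨fun k hk hk2 => ?_, ?_⟩
    · exact ((extWord_lt e (j + k) (by omega) (by omega)).symm.trans (ha k hk hk2)).trans
        (congrArg Bool.not (extWord_lt e j (by omega) (by omega)))
    · exact ((extWord_lt e (j + y + 1) (by omega) hA).symm.trans hb).trans
        (extWord_lt e j (by omega) (by omega))
  · by_cases hB : j + y + 1 = m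
    · have h2 : extWord m x e ⟨j + y + 1, hj⟩ = true := by
        rw [fin_congr (extWord m x e) hj (Nat.lt_succ_self m) hB]
        exact extWord_top e (Nat.lt_succ_self m)
      have htrue : extWord m x e ⟨j, (by omega : j < m + 1)⟩ = true := hb.symm.trans h2
      by_cases hC : j < m - x
      · have hj' : j = m - x - 1 := by omega
        have hfin : e ⟨m - x - 1, (by omega : m - x - 1 < m - x)⟩ = true :=
          (fin_congr e (by omega) (by omega) hj'.symm).trans
            ((extWord_lt e j (by omega) hC).symm.trans htrue)
        exact Bool.false_ne_true (htop.symm.trans hfin)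
      · have hf : extWord m x e ⟨j, (by omega : j < m + 1)⟩ = false :=
          extWord_mid e j (by omega) (by omega) (by omega)
        exact Bool.false_ne_true (hf.symm.trans htrue)
    · have h1f : extWord m x e ⟨j + y + 1, hj⟩ = false :=
        extWord_mid e (j + y + 1) (by omega) (by omega) (by omega)
      have hjf : extWord m x e ⟨j, (by omega : j < m + 1)⟩ = false := hb.symm.trans h1f
      have hmid := ha y hy1 (le_refl y)
      have hmid' : extWord m x e ⟨j + y, (by omega : j + y < m + 1)⟩ = true :=
        hmid.trans (by rw [hjf]; rfl)
      by_cases hD : j + y < m - x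
      · have hjy : j + y = m - x - 1 := by omega
        have hfin : e ⟨m - x - 1, (by omega : m - x - 1 < m - x)⟩ = true :=
          (fin_congr e (by omega) (by omega) hjy.symm).trans
            ((extWord_lt e (j + y) (by omega) hD).symm.trans hmid')
        exact Bool.false_ne_true (htop.symm.trans hfin)
      · have hf : extWord m x e ⟨j + y, (by omega : j + y < m + 1)⟩ = false :=
          extWord_mid e (j + y) (by omega) (by omega) (by omega)
        exact Bool.false_ne_true (hf.symm.trans hmid')

lemma loco_half (m x : ℕ) :
    locoN (m + 1) x = 2 * Nat.card {d : Fin (m + 1) → Bool //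
      noForbidden (m + 1) x d ∧ d ⟨m, Nat.lt_succ_self m⟩ = false} := by
  classical
  have e : {d : Fin (m + 1) → Bool //
        noForbidden (m + 1) x d ∧ ¬ d ⟨m, Nat.lt_succ_self m⟩ = false}
      ≃ {d : Fin (m + 1) → Bool //
        noForbidden (m + 1) x d ∧ d ⟨m, Nat.lt_succ_self m⟩ = false} :=
    { toFun := fun d => ⟨fun i => ! d.1 i, noForbidden_not d.2.1, by
        cases hb : d.1 ⟨m, Nat.lt_succ_self m⟩ with
        | false => exact absurd hb d.2.2
        | true => simp [hb]⟩
      invFun := fun d => ⟨fun i => ! d.1 i, noForbidden_not d.2.1, by simp [d.2.2]⟩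
      left_inv := fun d => Subtype.ext (funext fun i => Bool.not_not _)
      right_inv := fun d => Subtype.ext (funext fun i => Bool.not_not _) }
  calc locoN (m + 1) x
      = Nat.card {d : Fin (m + 1) → Bool //
          noForbidden (m + 1) x d ∧ d ⟨m, Nat.lt_succ_self m⟩ = false}
        + Nat.card {d : Fin (m + 1) → Bool //
          noForbidden (m + 1) x d ∧ ¬ d ⟨m, Nat.lt_succ_self m⟩ = false} :=
        card_split _ _
    _ = _ := by rw [Nat.card_congr e]; ring

lemma loco_aux (m x : ℕ) (hx : 1 ≤ x) (hm : x + 1 ≤ m)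
    (c' : Fin (m + 1) → Bool) (hc' : noForbidden (m + 1) x c')
    (h0 : c' ⟨m, Nat.lt_succ_self m⟩ = true)
    (hz : ∀ j : ℕ, (hj : j < m + 1) → m - x - 1 ≤ j → j ≤ m - 1 → c' ⟨j, hj⟩ = false)
    (c'' : Fin (m - x) → Bool)
    (hcc : ∀ i : Fin (m - x), c'' i = c' ⟨(i : ℕ), lt_of_lt_of_le i.isLt (Nat.le_succ_of_le (Nat.sub_le m x))⟩) :
    locoIdx (m + 1) x c' = Nat.card {d : Fin (m + 1) → Bool //
      noForbidden (m + 1) x d ∧ d ⟨m, Nat.lt_succ_self m⟩ = false}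
      + locoIdx (m - x) x c'' := by
  classical
  have hcfun : c'' = fun i : Fin (m - x) =>
      c' ⟨(i : ℕ), lt_of_lt_of_le i.isLt (by omega : m - x ≤ m + 1)⟩ := funext hcc
  subst hcfun
  -- witnesses of lexLt with top bit true live strictly below position m-x-1
  have hwit : ∀ d : Fin (m + 1) → Bool, lexLt (m + 1) d c' →
      ¬ d ⟨m, Nat.lt_succ_self m⟩ = false →
      ∃ i : Fin (m + 1), (i : ℕ) < m - x - 1 ∧ d i = false ∧ c' i = true ∧
        ∀ j : Fin (m + 1), (i : ℕ) < (j : ℕ) → d j = c' j := by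
    rintro d ⟨i, hi0, hi1, hi2⟩ hdm
    refine ⟨i, ?_, hi0, hi1, hi2⟩
    by_contra hcon
    have hlt := i.isLt
    have him : (i : ℕ) ≠ m := by
      intro h
      have hh : i = ⟨m, Nat.lt_succ_self m⟩ := Fin.ext h
      rw [hh] at hi0
      exact hdm hi0
    have hfalse : c' i = false := by
      have h := hz (i : ℕ) i.isLt (by omega) (by omega)
      rwa [Fin.eta] at h
    rw [hfalse] at hi1
    exact Bool.false_ne_true hi1
  have hTzero : ∀ d : Fin (m + 1) → Bool, lexLt (m + 1) d c' →
      ¬ d ⟨m, Nat.lt_succ_self m⟩ = false →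
      ∀ j : ℕ, (hj : j < m + 1) → m - x ≤ j → j ≤ m - 1 → d ⟨j, hj⟩ = false := by
    intro d hL hdm j hj hj1 hj2
    obtain ⟨i, hilt, _, _, hi2⟩ := hwit d hL hdm
    have h := hi2 ⟨j, hj⟩ (show (i : ℕ) < j by omega)
    rw [h]
    exact hz j hj (by omega) hj2
  have etop : ∀ e : Fin (m - x) → Bool,
      lexLt (m - x) e (fun i : Fin (m - x) =>
        c' ⟨(i : ℕ), lt_of_lt_of_le i.isLt (by omega : m - x ≤ m + 1)⟩) →
      e ⟨m - x - 1, (by omega : m - x - 1 < m - x)⟩ = false := by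
    rintro e ⟨i, hi0, hi1, hi2⟩
    have hlt := i.isLt
    rcases eq_or_lt_of_le (show (i : ℕ) ≤ m - x - 1 by omega) with h | h
    · have hh : (⟨m - x - 1, (by omega : m - x - 1 < m - x)⟩ : Fin (m - x)) = i :=
        Fin.ext h.symm
      rw [hh]
      exact hi0
    · rw [hi2 ⟨m - x - 1, (by omega : m - x - 1 < m - x)⟩ h]
      exact hz (m - x - 1) (by omega) (by omega) (by omega)
  have E2 : {d : Fin (m + 1) → Bool //
        (noForbidden (m + 1) x d ∧ lexLt (m + 1) d c') ∧ d ⟨m, Nat.lt_succ_self m⟩ = false}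
      ≃ {d : Fin (m + 1) → Bool //
        noForbidden (m + 1) x d ∧ d ⟨m, Nat.lt_succ_self m⟩ = false} :=
    Equiv.subtypeEquivRight (fun d =>
      ⟨fun h => ⟨h.1.1, h.2⟩,
       fun h => ⟨⟨h.1, ⟨⟨m, Nat.lt_succ_self m⟩, h.2, h0,
         fun j hj => absurd (hj.trans_le (Nat.le_of_lt_succ j.isLt)) (Nat.lt_irrefl m)⟩⟩, h.2⟩⟩)
  have E3 : {d : Fin (m + 1) → Bool //
        (noForbidden (m + 1) x d ∧ lexLt (m + 1) d c') ∧ ¬ d ⟨m, Nat.lt_succ_self m⟩ = false}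
      ≃ {e : Fin (m - x) → Bool // noForbidden (m - x) x e ∧
        lexLt (m - x) e (fun i : Fin (m - x) =>
          c' ⟨(i : ℕ), lt_of_lt_of_le i.isLt (by omega : m - x ≤ m + 1)⟩)} := by
    refine
      { toFun := fun d => ⟨fun i : Fin (m - x) =>
          d.1 ⟨(i : ℕ), lt_of_lt_of_le i.isLt (by omega : m - x ≤ m + 1)⟩, ?_, ?_⟩
        invFun := fun e => ⟨extWord m x e.1, ⟨?_, ?_⟩, ?_⟩
        left_inv := ?_
        right_inv := ?_ }
    · exact noForbidden_restrict (by omega) d.1 d.2.1.1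
    · obtain ⟨i, hilt, hi0, hi1, hi2⟩ := hwit d.1 d.2.1.2 d.2.2
      refine ⟨⟨(i : ℕ), by omega⟩, ?_, ?_, ?_⟩
      · exact hi0
      · exact hi1
      · intro j hj
        exact hi2 ⟨(j : ℕ), by have := j.isLt; omega⟩ hj
    · exact extWord_noForbidden m x hx hm e.1 e.2.1 (etop e.1 e.2.2)
    · obtain ⟨i, hi0, hi1, hi2⟩ := e.2.2
      have hilt := i.isLt
      refine ⟨⟨(i : ℕ), by omega⟩, ?_, ?_, ?_⟩
      · exact (extWord_lt e.1 (i : ℕ) (by omega) i.isLt).trans hi0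
      · exact hi1
      · intro j hj
        by_cases hjn : (j : ℕ) < m - x
        · have h2 := hi2 ⟨(j : ℕ), hjn⟩ hj
          have h3 := extWord_lt e.1 (j : ℕ) j.isLt hjn
          rw [Fin.eta] at h3
          rw [h3, h2]
        · by_cases hjm : (j : ℕ) = m
          · have hh : j = ⟨m, Nat.lt_succ_self m⟩ := Fin.ext hjm
            rw [hh, extWord_top e.1 (Nat.lt_succ_self m), h0]
          · have hjlt := j.isLt
            have h3 := extWord_mid e.1 (j : ℕ) j.isLt (by omega) (by omega)
            rw [Fin.eta] at h3
            rw [h3]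
            exact (hz (j : ℕ) j.isLt (by omega) (by omega)).symm
    · exact fun hcon =>
        Bool.false_ne_true
          (((extWord_top e.1 (Nat.lt_succ_self m)).symm.trans hcon).symm)
    · rintro ⟨d, ⟨hP, hL⟩, hdm⟩
      apply Subtype.ext
      funext i
      show extWord m x _ i = d i
      have hdm' : d ⟨m, Nat.lt_succ_self m⟩ = true := by
        cases hb : d ⟨m, Nat.lt_succ_self m⟩ with
        | false => exact absurd hb hdm
        | true => rfl
      by_cases hin : (i : ℕ) < m - x
      · have h3 := extWord_lt (fun i' : Fin (m - x) =>
            d ⟨(i' : ℕ), lt_of_lt_of_le i'.isLt (by omega : m - x ≤ m + 1)⟩)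
            (i : ℕ) i.isLt hin
        rw [Fin.eta] at h3
        rw [h3]
      · by_cases him : (i : ℕ) = m
        · have hh : i = ⟨m, Nat.lt_succ_self m⟩ := Fin.ext him
          rw [hh, extWord_top _ (Nat.lt_succ_self m), hdm']
        · have hilt := i.isLt
          have h3 := extWord_mid (fun i' : Fin (m - x) =>
              d ⟨(i' : ℕ), lt_of_lt_of_le i'.isLt (by omega : m - x ≤ m + 1)⟩)
              (i : ℕ) i.isLt (by omega) (by omega)
          rw [Fin.eta] at h3
          rw [h3]
          have h4 := hTzero d hL hdm (i : ℕ) i.isLt (by omega) (by omega)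
          rw [Fin.eta] at h4
          exact h4.symm
    · rintro ⟨e, he⟩
      apply Subtype.ext
      funext i
      exact extWord_lt e (i : ℕ) (by have := i.isLt; omega) i.isLt
  calc locoIdx (m + 1) x c'
      = Nat.card {d : Fin (m + 1) → Bool //
          (noForbidden (m + 1) x d ∧ lexLt (m + 1) d c') ∧ d ⟨m, Nat.lt_succ_self m⟩ = false}
        + Nat.card {d : Fin (m + 1) → Bool //
          (noForbidden (m + 1) x d ∧ lexLt (m + 1) d c') ∧
            ¬ d ⟨m, Nat.lt_succ_self m⟩ = false} :=
        card_split _ _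
    _ = _ := by rw [Nat.card_congr E2, Nat.card_congr E3]; rfl


/-- For all `x ≥ 1` and `m ≥ x + 1`, if `c' ∈ C(m + 1, x)` starts from the
left with `1` followed by `x + 1` zeros (Group 4), and `c''` is the word formed by the
`m - x` rightmost bits of `c'`, then `c'' ∈ C(m - x, x)` and
`2 (g(m + 1, x, c') - g(m - x, x, c'')) = N(m + 1, x)`, i.e. the index shift is
`ζ₄ = (1/2) N(m + 1, x)`. -/
theorem loco_group4_shift (m x : ℕ) (hx : 1 ≤ x) (hm : x + 1 ≤ m)
    (c' : Fin (m + 1) → Bool) (hc' : noForbidden (m + 1) x c')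
    (h0 : c' ⟨m, by omega⟩ = true)
    (h1 : ∀ k, 1 ≤ k → k ≤ x + 1 → c' ⟨m - k, by omega⟩ = false) :
    noForbidden (m - x) x
      (fun i : Fin (m - x) => c' ⟨(i : ℕ), lt_of_lt_of_le i.isLt (by omega)⟩) ∧
    2 * ((locoIdx (m + 1) x c' : ℤ)
          - (locoIdx (m - x) x
              (fun i : Fin (m - x) => c' ⟨(i : ℕ), lt_of_lt_of_le i.isLt (by omega)⟩) : ℤ))
      = Nex ((m : ℤ) + 1) x := by
  have hmx : m - x ≤ m + 1 := by omega
  have hz : ∀ j : ℕ, (hj : j < m + 1) → m - x - 1 ≤ j → j ≤ m - 1 → c' ⟨j, hj⟩ = false := by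
    intro j hj hj1 hj2
    have h := h1 (m - j) (by omega) (by omega)
    have h2 : c' ⟨m - (m - j), by omega⟩ = c' ⟨j, hj⟩ := fin_congr c' (by omega) hj (by omega)
    rw [h2] at h
    exact h
  constructor
  · exact noForbidden_restrict hmx c' hc'
  · show 2 * ((locoIdx (m + 1) x c' : ℤ)
        - (locoIdx (m - x) x
            (fun i : Fin (m - x) => c' ⟨(i : ℕ), lt_of_lt_of_le i.isLt hmx⟩) : ℤ))
      = Nex ((m : ℤ) + 1) x
    have ht : ((m : ℤ) + 1).toNat = m + 1 := by omega
    have hNex : Nex ((m : ℤ) + 1) x = (locoN (m + 1) x : ℤ) := by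
      unfold Nex
      rw [if_neg (by omega), ht]
    have hA := loco_aux m x hx hm c' hc' h0 hz
      (fun i : Fin (m - x) => c' ⟨(i : ℕ), lt_of_lt_of_le i.isLt hmx⟩) (fun i => rfl)
    have hH := loco_half m x
    rw [hNex, hA, hH]
    push_cast
    ring
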